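/- The canonical surjection T/(I·T + (Q)) → T/J satisfies: (i) for every pair of integers (γ,δ) with γ ≤ a and δ ≤ b, it restricts to a k-linear bijection from the image in T/(I·T+(Q)) of T_{(γ,δ)} onto the image in T/J of T_{(γ,δ)}; (ii) the image in T/J of T_{(γ,δ)} is zero whenever γ ≥ a+1 or δ ≥ b+1. -/

import Mathlib

open MvPolynomial

noncomputable section

/-- The bigrading on `T = k[x_1,…,x_n,y_1,…,y_n]` (with the `x`-variables indexed by
`Sum.inl` and the `y`-variables by `Sum.inr`): each `x_i` has bidegree `(1,0)` and
each `y_i` has bidegree `(0,1)`.  We use `ℤ × ℤ` so that components of negative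
bidegree make sense (they are zero). -/
def bidegWeight (n : ℕ) : (Fin n ⊕ Fin n) → ℤ × ℤ :=
  Sum.elim (fun _ => ((1 : ℤ), (0 : ℤ))) (fun _ => ((0 : ℤ), (1 : ℤ)))

/-- A homogeneous ideal of `S = k[x_1,…,x_n]`: an ideal containing all homogeneous
components of its elements. -/
def IsHomogeneousIdeal {k : Type} [Field k] {n : ℕ}
    (I : Ideal (MvPolynomial (Fin n) k)) : Prop :=
  ∀ f ∈ I, ∀ d : ℕ, homogeneousComponent d f ∈ I

/-- A bihomogeneous ideal of `T`: an ideal containing all bihomogeneous components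
of its elements. -/
def IsBihomogeneousIdeal {k : Type} [Field k] {n : ℕ}
    (P : Ideal (MvPolynomial (Fin n ⊕ Fin n) k)) : Prop :=
  ∀ f ∈ P, ∀ γ δ : ℤ, weightedHomogeneousComponent (bidegWeight n) (γ, δ) f ∈ P

/-- `depth(S₊, S/I) ≥ d`: there exist `d` homogeneous elements of positive degree
of `S` forming a regular sequence on the `S`-module `S/I`. -/
def DepthGE {k : Type} [Field k] {n : ℕ} (I : Ideal (MvPolynomial (Fin n) k))
    (d : ℕ) : Prop :=
  ∃ fs : List (MvPolynomial (Fin n) k), fs.length = d ∧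
    (∀ f ∈ fs, ∃ m : ℕ, 0 < m ∧ f ∈ homogeneousSubmodule (Fin n) k m) ∧
    RingTheory.Sequence.IsRegular (MvPolynomial (Fin n) k ⧸ I) fs

/-- The ideal `m_x = (x_1,…,x_n)` of `T`. -/
def mxIdeal (k : Type) [Field k] (n : ℕ) : Ideal (MvPolynomial (Fin n ⊕ Fin n) k) :=
  Ideal.span (Set.range fun i : Fin n => X (Sum.inl i))

/-- The ideal `m_y = (y_1,…,y_n)` of `T`. -/
def myIdeal (k : Type) [Field k] (n : ℕ) : Ideal (MvPolynomial (Fin n ⊕ Fin n) k) :=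
  Ideal.span (Set.range fun i : Fin n => X (Sum.inr i))

/-- The quadric `Q = x_1y_1 + ⋯ + x_ny_n ∈ T`. -/
def Qpoly (k : Type) [Field k] (n : ℕ) : MvPolynomial (Fin n ⊕ Fin n) k :=
  ∑ i : Fin n, X (Sum.inl i) * X (Sum.inr i)

/-- The TNT frame `J = I·T + m_x^{a+1} + m_y^{b+1} + (Q)` of an ideal `I ⊆ S`. -/
def frameIdeal {k : Type} [Field k] {n : ℕ} (I : Ideal (MvPolynomial (Fin n) k))
    (a b : ℕ) : Ideal (MvPolynomial (Fin n ⊕ Fin n) k) :=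
  I.map (rename Sum.inl) ⊔ (mxIdeal k n) ^ (a + 1) ⊔ (myIdeal k n) ^ (b + 1)
    ⊔ Ideal.span {Qpoly k n}

/-- A `T`-linear map `φ : N → T/K` (where `N`, `K` are ideals of `T`) has bidegree
`(α,β)` if it maps every bihomogeneous element of `N` of bidegree `(γ,δ)` into the
image in `T/K` of the bidegree-`(γ+α, δ+β)` component of `T`. -/
def HomOfBidegree {k : Type} [Field k] {n : ℕ}
    (N K : Ideal (MvPolynomial (Fin n ⊕ Fin n) k)) (α β : ℤ)
    (φ : N →ₗ[MvPolynomial (Fin n ⊕ Fin n) k]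
      (MvPolynomial (Fin n ⊕ Fin n) k ⧸ K)) : Prop :=
  ∀ (γ δ : ℤ) (f : MvPolynomial (Fin n ⊕ Fin n) k) (hf : f ∈ N),
    IsWeightedHomogeneous (bidegWeight n) f (γ, δ) →
      ∃ g : MvPolynomial (Fin n ⊕ Fin n) k,
        IsWeightedHomogeneous (bidegWeight n) g (γ + α, δ + β) ∧
        φ ⟨f, hf⟩ = Ideal.Quotient.mk K g

/-- The `k`-derivation `D_A` of `T` with `D_A(x_i) = 0` and
`D_A(y_i) = Σ_j A_{ij}·x_j`, applied to `f`. -/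
def derA {k : Type} [Field k] {n : ℕ} (A : Matrix (Fin n) (Fin n) k)
    (f : MvPolynomial (Fin n ⊕ Fin n) k) : MvPolynomial (Fin n ⊕ Fin n) k :=
  ∑ i : Fin n, (∑ j : Fin n, A i j • X (Sum.inl j)) * pderiv (Sum.inr i) f

/-- The ideal `p = (y_1²,…,y_n²) + y_1·m_y ⊆ T` used in the characteristic-two
tweaked frame (`h` witnesses `0 < n` so that `y_1` makes sense). -/
def pIdeal (k : Type) [Field k] (n : ℕ) (h : 0 < n) :
    Ideal (MvPolynomial (Fin n ⊕ Fin n) k) :=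
  Ideal.span ((Set.range fun i : Fin n => (X (Sum.inr i) : MvPolynomial (Fin n ⊕ Fin n) k) ^ 2)
    ∪ (Set.range fun i : Fin n => X (Sum.inr (⟨0, h⟩ : Fin n)) * X (Sum.inr i)))

/-- The tweaked frame `J' = I·T + m_x^{a+1} + p + (Q)` of size `a` for `I`
(characteristic two). -/
def tweakedFrameIdeal {k : Type} [Field k] {n : ℕ} (I : Ideal (MvPolynomial (Fin n) k))
    (a : ℕ) (h : 0 < n) : Ideal (MvPolynomial (Fin n ⊕ Fin n) k) :=
  I.map (rename Sum.inl) ⊔ (mxIdeal k n) ^ (a + 1) ⊔ pIdeal k n h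
    ⊔ Ideal.span {Qpoly k n}

/-- Abbreviation for `S = k[x_1,…,x_n]`. -/
abbrev Spoly (k : Type) [Field k] (n : ℕ) := MvPolynomial (Fin n) k

/-- Abbreviation for `T = k[x_1,…,x_n,y_1,…,y_n]`. -/
abbrev Tpoly (k : Type) [Field k] (n : ℕ) := MvPolynomial (Fin n ⊕ Fin n) k


namespace TNTAux

open Finsupp

variable {k : Type} [Field k] {n : ℕ}

/-- x-degree and y-degree of an exponent vector. -/
def degX (d : (Fin n ⊕ Fin n) →₀ ℕ) : ℕ := ∑ j : Fin n, d (Sum.inl j)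

def degY (d : (Fin n ⊕ Fin n) →₀ ℕ) : ℕ := ∑ j : Fin n, d (Sum.inr j)

lemma degX_add (d₁ d₂ : (Fin n ⊕ Fin n) →₀ ℕ) : degX (d₁ + d₂) = degX d₁ + degX d₂ := by
  simp [degX, Finset.sum_add_distrib]

lemma degY_add (d₁ d₂ : (Fin n ⊕ Fin n) →₀ ℕ) : degY (d₁ + d₂) = degY d₁ + degY d₂ := by
  simp [degY, Finset.sum_add_distrib]

lemma weight_bideg (d : (Fin n ⊕ Fin n) →₀ ℕ) :
    Finsupp.weight (bidegWeight n) d = (((degX d : ℕ) : ℤ), ((degY d : ℕ) : ℤ)) := by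
  rw [Finsupp.weight_apply]
  rw [Finsupp.sum_fintype _ _ (fun i => by simp)]
  rw [Fintype.sum_sum_type]
  ext
  · simp [bidegWeight, degX, Prod.fst_sum]
  · simp [bidegWeight, degY, Prod.snd_sum]

section CoeffBounds

variable {σ : Type}

lemma exists_coeff_mul (f g : MvPolynomial σ k) (d : σ →₀ ℕ)
    (h : coeff d (f * g) ≠ 0) :
    ∃ d₁ d₂, d₁ + d₂ = d ∧ coeff d₁ f ≠ 0 ∧ coeff d₂ g ≠ 0 := by
  classical
  rw [coeff_mul] at h
  obtain ⟨p, hp, hne⟩ := Finset.exists_ne_zero_of_sum_ne_zero h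
  exact ⟨p.1, p.2, Finset.HasAntidiagonal.mem_antidiagonal.mp hp, left_ne_zero_of_mul hne,
    right_ne_zero_of_mul hne⟩

lemma span_coeff (G : Set (MvPolynomial σ k)) (ψ : (σ →₀ ℕ) → ℕ)
    (hψ : ∀ d₁ d₂, ψ (d₁ + d₂) = ψ d₁ + ψ d₂)
    (hG : ∀ g ∈ G, ∀ d, coeff d g ≠ 0 → 1 ≤ ψ d) :
    ∀ f ∈ Ideal.span G, ∀ d, coeff d f ≠ 0 → 1 ≤ ψ d := by
  intro f hf
  induction hf using Submodule.span_induction with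
  | mem g hg => exact hG g hg
  | zero => intro d hd; simp at hd
  | add x y hx hy ihx ihy =>
      intro d hd
      rcases (by by_contra hc; push_neg at hc; simp [hc.1, hc.2] at hd :
        coeff d x ≠ 0 ∨ coeff d y ≠ 0) with h | h
      · exact ihx d h
      · exact ihy d h
  | smul r x hx ih =>
      intro d hd
      rw [smul_eq_mul] at hd
      obtain ⟨d₁, d₂, rfl, h₁, h₂⟩ := exists_coeff_mul r x d hd
      rw [hψ]
      exact le_add_of_nonneg_of_le (Nat.zero_le _) (ih d₂ h₂)

lemma pow_span_coeff (G : Set (MvPolynomial σ k)) (ψ : (σ →₀ ℕ) → ℕ)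
    (hψ : ∀ d₁ d₂, ψ (d₁ + d₂) = ψ d₁ + ψ d₂)
    (hG : ∀ g ∈ G, ∀ d, coeff d g ≠ 0 → 1 ≤ ψ d) (m : ℕ) :
    ∀ f ∈ (Ideal.span G) ^ m, ∀ d, coeff d f ≠ 0 → m ≤ ψ d := by
  induction m with
  | zero => intro f _ d _; exact Nat.zero_le _
  | succ m ih =>
      intro f hf
      rw [pow_succ] at hf
      refine Submodule.mul_induction_on hf ?_ ?_
      · intro p hp q hq d hd
        obtain ⟨d₁, d₂, rfl, h₁, h₂⟩ := exists_coeff_mul p q d hd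
        rw [hψ]
        exact add_le_add (ih p hp d₁ h₁) (span_coeff G ψ hψ hG q hq d₂ h₂)
      · intro x y hx hy d hd
        rcases (by by_contra hc; push_neg at hc; simp [hc.1, hc.2] at hd :
          coeff d x ≠ 0 ∨ coeff d y ≠ 0) with h | h
        · exact hx d h
        · exact hy d h

end CoeffBounds

lemma mx_gen : ∀ g ∈ (Set.range fun i : Fin n => (X (Sum.inl i) : Tpoly k n)),
    ∀ d, coeff d g ≠ 0 → 1 ≤ degX d := by
  classical
  rintro g ⟨i, rfl⟩ d hd
  rw [coeff_X'] at hd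
  split_ifs at hd with h
  · subst h
    simp [degX, Finsupp.single_apply]
  · exact absurd rfl hd

lemma my_gen : ∀ g ∈ (Set.range fun i : Fin n => (X (Sum.inr i) : Tpoly k n)),
    ∀ d, coeff d g ≠ 0 → 1 ≤ degY d := by
  classical
  rintro g ⟨i, rfl⟩ d hd
  rw [coeff_X'] at hd
  split_ifs at hd with h
  · subst h
    simp [degY, Finsupp.single_apply]
  · exact absurd rfl hd

lemma mx_pow_coeff {m : ℕ} {q : Tpoly k n} (hq : q ∈ (mxIdeal k n) ^ m) :
    ∀ d, coeff d q ≠ 0 → m ≤ degX d :=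
  pow_span_coeff _ degX degX_add mx_gen m q hq

lemma my_pow_coeff {m : ℕ} {q : Tpoly k n} (hq : q ∈ (myIdeal k n) ^ m) :
    ∀ d, coeff d q ≠ 0 → m ≤ degY d :=
  pow_span_coeff _ degY degY_add my_gen m q hq

lemma comp_vanish_mx {γ δ : ℤ} {m : ℕ} (hγ : γ < (m : ℤ)) {q : Tpoly k n}
    (hq : q ∈ (mxIdeal k n) ^ m) :
    weightedHomogeneousComponent (bidegWeight n) (γ, δ) q = 0 := by
  classical
  ext d
  rw [coeff_weightedHomogeneousComponent, coeff_zero]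
  split_ifs with h
  · by_contra hc
    have hm := mx_pow_coeff hq d hc
    rw [weight_bideg] at h
    have h1 : ((degX d : ℕ) : ℤ) = γ := congrArg Prod.fst h
    omega
  · rfl

lemma comp_vanish_my {γ δ : ℤ} {m : ℕ} (hδ : δ < (m : ℤ)) {q : Tpoly k n}
    (hq : q ∈ (myIdeal k n) ^ m) :
    weightedHomogeneousComponent (bidegWeight n) (γ, δ) q = 0 := by
  classical
  ext d
  rw [coeff_weightedHomogeneousComponent, coeff_zero]
  split_ifs with h
  · by_contra hc
    have hm := my_pow_coeff hq d hc
    rw [weight_bideg] at h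
    have h1 : ((degY d : ℕ) : ℤ) = δ := congrArg Prod.snd h
    omega
  · rfl

lemma monomial_mem_mx_pow (d : (Fin n ⊕ Fin n) →₀ ℕ) (c : k) :
    monomial d c ∈ (mxIdeal k n) ^ (degX d) := by
  classical
  rw [monomial_eq]
  apply Ideal.mul_mem_left
  set e : (Fin n ⊕ Fin n) → ℕ := Sum.elim (fun j => d (Sum.inl j)) (fun _ => 0) with he
  have h1 : ∀ i ∈ d.support,
      (X i : Tpoly k n) ^ d i ∈ (mxIdeal k n) ^ (e i) := by
    intro i _
    rcases i with j | j
    · exact Ideal.pow_mem_pow (Ideal.subset_span (Set.mem_range_self j)) _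
    · simp only [he, Sum.elim_inr, pow_zero, Ideal.one_eq_top]
      exact Submodule.mem_top
  have h2 := Ideal.prod_mem_prod h1
  rw [Finset.prod_pow_eq_pow_sum] at h2
  have h3 : ∑ i ∈ d.support, e i = degX d := by
    rw [Finset.sum_subset (Finset.subset_univ d.support)]
    · rw [Fintype.sum_sum_type]
      simp [he, degX]
    · intro i _ hi
      rcases i with j | j
      · simp only [he, Sum.elim_inl]
        exact Finsupp.notMem_support_iff.mp hi
      · simp [he]
  rw [h3] at h2
  exact h2

lemma monomial_mem_my_pow (d : (Fin n ⊕ Fin n) →₀ ℕ) (c : k) :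
    monomial d c ∈ (myIdeal k n) ^ (degY d) := by
  classical
  rw [monomial_eq]
  apply Ideal.mul_mem_left
  set e : (Fin n ⊕ Fin n) → ℕ := Sum.elim (fun _ => 0) (fun j => d (Sum.inr j)) with he
  have h1 : ∀ i ∈ d.support,
      (X i : Tpoly k n) ^ d i ∈ (myIdeal k n) ^ (e i) := by
    intro i _
    rcases i with j | j
    · simp only [he, Sum.elim_inl, pow_zero, Ideal.one_eq_top]
      exact Submodule.mem_top
    · exact Ideal.pow_mem_pow (Ideal.subset_span (Set.mem_range_self j)) _
  have h2 := Ideal.prod_mem_prod h1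
  rw [Finset.prod_pow_eq_pow_sum] at h2
  have h3 : ∑ i ∈ d.support, e i = degY d := by
    rw [Finset.sum_subset (Finset.subset_univ d.support)]
    · rw [Fintype.sum_sum_type]
      simp [he, degY]
    · intro i _ hi
      rcases i with j | j
      · simp [he]
      · simp only [he, Sum.elim_inr]
        exact Finsupp.notMem_support_iff.mp hi
  rw [h3] at h2
  exact h2

lemma homog_mem_mx_pow {γ δ : ℤ} {m : ℕ} (hγ : (m : ℤ) ≤ γ) (f : Tpoly k n)
    (hf : IsWeightedHomogeneous (bidegWeight n) f (γ, δ)) : f ∈ (mxIdeal k n) ^ m := by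
  rw [f.as_sum]
  apply Ideal.sum_mem
  intro d hd
  have h0 := hf (MvPolynomial.mem_support_iff.mp hd)
  rw [weight_bideg] at h0
  have h1 : ((degX d : ℕ) : ℤ) = γ := congrArg Prod.fst h0
  exact Ideal.pow_le_pow_right (by omega) (monomial_mem_mx_pow d _)

lemma homog_mem_my_pow {γ δ : ℤ} {m : ℕ} (hδ : (m : ℤ) ≤ δ) (f : Tpoly k n)
    (hf : IsWeightedHomogeneous (bidegWeight n) f (γ, δ)) : f ∈ (myIdeal k n) ^ m := by
  rw [f.as_sum]
  apply Ideal.sum_mem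
  intro d hd
  have h0 := hf (MvPolynomial.mem_support_iff.mp hd)
  rw [weight_bideg] at h0
  have h1 : ((degY d : ℕ) : ℤ) = δ := congrArg Prod.snd h0
  exact Ideal.pow_le_pow_right (by omega) (monomial_mem_my_pow d _)

section HomogSpan

variable {σ M : Type} [AddCommGroup M]

lemma wcomp_mul [DecidableEq M] (w : σ → M) {g : MvPolynomial σ k} {e : M}
    (hg : IsWeightedHomogeneous w g e) (t : MvPolynomial σ k) (m : M) :
    weightedHomogeneousComponent w m (g * t) =
      g * weightedHomogeneousComponent w (m - e) t := by
  classical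
  ext d
  rw [coeff_weightedHomogeneousComponent, coeff_mul, coeff_mul]
  by_cases h : Finsupp.weight w d = m
  · rw [if_pos h]
    apply Finset.sum_congr rfl
    intro p hp
    rw [coeff_weightedHomogeneousComponent]
    by_cases h1 : coeff p.1 g = 0
    · simp [h1]
    · rw [if_pos]
      have hd : Finsupp.weight w p.1 + Finsupp.weight w p.2 = m := by
        rw [← map_add, Finset.HasAntidiagonal.mem_antidiagonal.mp hp, h]
      rw [hg h1] at hd
      rw [← hd]; abel
  · rw [if_neg h]
    symm
    apply Finset.sum_eq_zero
    intro p hp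
    rw [coeff_weightedHomogeneousComponent]
    by_cases h1 : coeff p.1 g = 0
    · simp [h1]
    · rw [if_neg, mul_zero]
      intro h2
      apply h
      rw [← Finset.HasAntidiagonal.mem_antidiagonal.mp hp, map_add, hg h1, h2]
      abel

lemma span_homog_comp_mem [DecidableEq M] (w : σ → M)
    (G : Set (MvPolynomial σ k)) (hG : ∀ g ∈ G, ∃ e, IsWeightedHomogeneous w g e) :
    ∀ f ∈ Ideal.span G, ∀ m, weightedHomogeneousComponent w m f ∈ Ideal.span G := by
  intro f hf
  induction hf using Submodule.span_induction with
  | mem g hg =>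
      intro m
      obtain ⟨e, he⟩ := hG g hg
      by_cases hme : m = e
      · rw [hme, he.weightedHomogeneousComponent_same]
        exact Ideal.subset_span hg
      · rw [he.weightedHomogeneousComponent_ne m hme]
        exact Ideal.zero_mem _
  | zero => intro m; rw [map_zero]; exact Ideal.zero_mem _
  | add x y hx hy ihx ihy =>
      intro m; rw [map_add]; exact Ideal.add_mem _ (ihx m) (ihy m)
  | smul r x hx ih =>
      intro m
      rw [smul_eq_mul]
      have hfin := weightedHomogeneousComponent_finsupp (w := w) (φ := r)
      have hr : r = ∑ e ∈ hfin.toFinset, weightedHomogeneousComponent w e r := by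
        rw [← finsum_eq_sum _ hfin, sum_weightedHomogeneousComponent]
      rw [hr, Finset.sum_mul, map_sum]
      apply Ideal.sum_mem
      intro e _
      rw [wcomp_mul w (mem_weightedHomogeneousSubmodule _ _ _ _ |>.mp
        (weightedHomogeneousComponent_mem w r e)) x m]
      exact Ideal.mul_mem_left _ _ (ih (m - e))

end HomogSpan

lemma Q_homog : IsWeightedHomogeneous (bidegWeight n) (Qpoly k n) ((1 : ℤ), (1 : ℤ)) := by
  have : Qpoly k n ∈ weightedHomogeneousSubmodule k (bidegWeight n) (1, 1) := by
    apply Submodule.sum_mem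
    intro i _
    rw [mem_weightedHomogeneousSubmodule]
    have h1 := isWeightedHomogeneous_X k (bidegWeight n) (Sum.inl i)
    have h2 := isWeightedHomogeneous_X k (bidegWeight n) (Sum.inr i)
    have := h1.mul h2
    simpa [bidegWeight] using this
  exact this

lemma rename_homog {g : MvPolynomial (Fin n) k} {dd : ℕ} (hg : g.IsHomogeneous dd) :
    IsWeightedHomogeneous (bidegWeight n)
      (rename Sum.inl g : Tpoly k n) (((dd : ℕ) : ℤ), 0) := by
  intro d hd
  obtain ⟨u, rfl, hu⟩ := coeff_rename_ne_zero _ _ _ hd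
  have hdeg : Finsupp.weight (1 : Fin n → ℕ) u = dd := hg hu
  rw [Finsupp.weight_apply, Finsupp.sum_fintype _ _ (fun i => by simp)] at hdeg
  simp only [Pi.one_apply, smul_eq_mul, mul_one] at hdeg
  rw [Finsupp.weight_apply, Finsupp.sum_fintype _ _ (fun i => by simp)]
  rw [Fintype.sum_sum_type]
  have h1 : ∀ j : Fin n, (Finsupp.mapDomain (Sum.inl : Fin n → Fin n ⊕ Fin n) u) (Sum.inl j) = u j :=
    fun j => Finsupp.mapDomain_apply Sum.inl_injective u j
  have h2 : ∀ j : Fin n, (Finsupp.mapDomain (Sum.inl : Fin n → Fin n ⊕ Fin n) u) (Sum.inr j) = 0 :=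
    fun j => Finsupp.mapDomain_notin_range _ _ (by simp)
  ext
  · simp only [bidegWeight, h1, h2, Prod.fst_sum]
    simp only [Sum.elim_inl, Sum.elim_inr, Prod.smul_mk, smul_zero, smul_eq_mul, mul_one,
      Prod.fst_sum, Prod.fst_add, Prod.mk_add_mk]
    push_cast
    rw [← hdeg]
    simp
  · simp [bidegWeight, h1, h2, Prod.snd_sum]

lemma map_eq_span_comps (I : Ideal (MvPolynomial (Fin n) k)) (hIhom : IsHomogeneousIdeal I) :
    I.map (rename Sum.inl (R := k) (σ := Fin n) (τ := Fin n ⊕ Fin n)) =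
      Ideal.span ((rename Sum.inl) ''
        {g : MvPolynomial (Fin n) k | ∃ f ∈ I, ∃ dd : ℕ, g = homogeneousComponent dd f}) := by
  apply le_antisymm
  · rw [Ideal.map_le_iff_le_comap]
    intro f hf
    rw [Ideal.mem_comap]
    have : (rename (Sum.inl : Fin n → Fin n ⊕ Fin n) (R := k)) f =
        ∑ i ∈ Finset.range (f.totalDegree + 1),
          (rename (Sum.inl : Fin n → Fin n ⊕ Fin n)) (homogeneousComponent i f) := by
      rw [← map_sum, sum_homogeneousComponent]
    rw [this]
    apply Ideal.sum_mem
    intro i _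
    exact Ideal.subset_span ⟨homogeneousComponent i f, ⟨f, hf, i, rfl⟩, rfl⟩
  · rw [Ideal.span_le]
    rintro _ ⟨g, ⟨f, hf, dd, rfl⟩, rfl⟩
    exact Ideal.mem_map_of_mem _ (hIhom f hf dd)

lemma K_comp_mem (I : Ideal (MvPolynomial (Fin n) k)) (hIhom : IsHomogeneousIdeal I)
    (K : Ideal (Tpoly k n))
    (hK : K = I.map (rename Sum.inl) ⊔ Ideal.span {Qpoly k n}) :
    ∀ f ∈ K, ∀ m, weightedHomogeneousComponent (bidegWeight n) m f ∈ K := by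
  have hspan : K = Ideal.span (((rename Sum.inl) ''
      {g : MvPolynomial (Fin n) k | ∃ f ∈ I, ∃ dd : ℕ, g = homogeneousComponent dd f})
      ∪ {Qpoly k n}) := by
    rw [hK, map_eq_span_comps I hIhom, Ideal.span_union]
  rw [hspan]
  apply span_homog_comp_mem
  rintro g (⟨g', ⟨f, hf, dd, rfl⟩, rfl⟩ | hg)
  · exact ⟨(((dd : ℕ) : ℤ), 0), rename_homog (homogeneousComponent_isHomogeneous dd f)⟩
  · rw [Set.mem_singleton_iff] at hg
    subst hg
    exact ⟨((1 : ℤ), (1 : ℤ)), Q_homog⟩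

lemma key (I : Ideal (MvPolynomial (Fin n) k)) (hIhom : IsHomogeneousIdeal I)
    (a b : ℕ) (K : Ideal (Tpoly k n))
    (hK : K = I.map (rename Sum.inl) ⊔ Ideal.span {Qpoly k n})
    {γ δ : ℤ} (hγ : γ ≤ (a : ℤ)) (hδ : δ ≤ (b : ℤ)) (h : Tpoly k n)
    (hhom : IsWeightedHomogeneous (bidegWeight n) h (γ, δ))
    (hmem : h ∈ frameIdeal I a b) : h ∈ K := by
  rw [frameIdeal] at hmem
  obtain ⟨u, hu, s, hs, rfl⟩ := Submodule.mem_sup.mp hmem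
  obtain ⟨v, hv, r, hr, rfl⟩ := Submodule.mem_sup.mp hu
  obtain ⟨p, hp, q, hq, rfl⟩ := Submodule.mem_sup.mp hv
  have hps : p + s ∈ K := by
    rw [hK]
    exact Submodule.add_mem _ (Submodule.mem_sup_left hp) (Submodule.mem_sup_right hs)
  have hCh := hhom.weightedHomogeneousComponent_same
  have hre : p + q + r + s = (p + s) + q + r := by ring
  rw [hre, map_add, map_add] at hCh
  rw [comp_vanish_mx (by push_cast; omega) hq, comp_vanish_my (by push_cast; omega) hr,
    add_zero, add_zero] at hCh
  rw [hre, ← hCh]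
  exact K_comp_mem I hIhom K hK _ hps _

end TNTAux

/-- properties of the canonical surjection `T/(I·T + (Q)) → T/J`. -/
theorem stmt1 {k : Type} [Field k] {n : ℕ} (hn : 1 ≤ n)
    (I : Ideal (Spoly k n)) (hIhom : IsHomogeneousIdeal I)
    (a b : ℕ) (ha : 2 ≤ a) (hb : 1 ≤ b)
    (K J : Ideal (Tpoly k n))
    (hK : K = I.map (rename Sum.inl) ⊔ Ideal.span {Qpoly k n})
    (hJ : J = frameIdeal I a b)
    (hKJ : K ≤ J) :
    -- (i) for `γ ≤ a`, `δ ≤ b` the canonical surjection restricts to a bijection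
    -- between the images of the bidegree-(γ,δ) component of `T`
    (∀ γ δ : ℤ, γ ≤ (a : ℤ) → δ ≤ (b : ℤ) →
      Set.BijOn (Ideal.Quotient.factor (S := K) (T := J) hKJ)
        ((Ideal.Quotient.mk K) '' {f | IsWeightedHomogeneous (bidegWeight n) f (γ, δ)})
        ((Ideal.Quotient.mk J) '' {f | IsWeightedHomogeneous (bidegWeight n) f (γ, δ)})) ∧
    -- (ii) the image in `T/J` of the bidegree-(γ,δ) component vanishes for
    -- `γ ≥ a+1` or `δ ≥ b+1`
    (∀ γ δ : ℤ, ((a : ℤ) + 1 ≤ γ ∨ (b : ℤ) + 1 ≤ δ) →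
      ∀ f : Tpoly k n, IsWeightedHomogeneous (bidegWeight n) f (γ, δ) →
        Ideal.Quotient.mk J f = 0) := by
  classical
  constructor
  · intro γ δ hγ hδ
    refine ⟨?_, ?_, ?_⟩
    · rintro y ⟨f, hf, rfl⟩
      exact ⟨f, hf, (Ideal.Quotient.factor_mk hKJ f).symm ▸ rfl⟩
    · rintro y ⟨f, hf, rfl⟩ y' ⟨g, hg, rfl⟩ heq
      rw [Ideal.Quotient.factor_mk, Ideal.Quotient.factor_mk,
        Ideal.Quotient.mk_eq_mk_iff_sub_mem] at heq
      rw [hJ] at heq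
      have hsubhom : IsWeightedHomogeneous (bidegWeight n) (f - g) (γ, δ) :=
        (weightedHomogeneousSubmodule k (bidegWeight n) (γ, δ)).sub_mem hf hg
      have hFG : f - g ∈ K := TNTAux.key I hIhom a b K hK hγ hδ (f - g) hsubhom heq
      rw [Ideal.Quotient.mk_eq_mk_iff_sub_mem]
      exact hFG
    · rintro y ⟨f, hf, rfl⟩
      exact ⟨Ideal.Quotient.mk K f, ⟨f, hf, rfl⟩, Ideal.Quotient.factor_mk hKJ f⟩
  · intro γ δ hcase f hf
    rw [Ideal.Quotient.eq_zero_iff_mem, hJ, frameIdeal]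
    rcases hcase with h | h
    · exact Submodule.mem_sup_left (Submodule.mem_sup_left (Submodule.mem_sup_right
        (TNTAux.homog_mem_mx_pow (by push_cast; omega) f hf)))
    · exact Submodule.mem_sup_left (Submodule.mem_sup_right
        (TNTAux.homog_mem_my_pow (by push_cast; omega) f hf))
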